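/- arXiv:1105.0694 — 3 statements merged into one kernel-verified Lean document; each statement's English description precedes it below -/
import Mathlib

section
/- Let T > 0, θ ∈ (0,1) and C > 0. Let I be a countable index set and let (αᵢ, βᵢ), i ∈ I, be pairwise disjoint nonempty open subintervals of (0,T) (so 0 ≤ αᵢ < βᵢ ≤ T). Let g : ℝ → ℝ be nonnegative and integrable on (0,T). Assume that for every i ∈ I and every t ∈ (αᵢ, βᵢ) one has C·(βᵢ − t)^{−θ} ≤ 1 + g(t). Then ∑_{i∈I} (βᵢ − αᵢ)^{1−θ} ≤ ((1−θ)/C)·(T + ∫₀ᵀ g(t) dt), and in particular this sum is finite. -/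
open MeasureTheory Set ENNReal

/-- Abstract form of Lemma 4.2: if on each of countably many pairwise disjoint
subintervals `(aᵢ, bᵢ)` of `(0,T)` one has `C (bᵢ - t)^(-θ) ≤ 1 + g t` with `g ≥ 0`
integrable, then `∑ᵢ (bᵢ - aᵢ)^(1-θ) ≤ ((1-θ)/C) (T + ∫₀ᵀ g)` (in particular finite). -/
theorem sum_interval_lengths_pow_le {I : Type*} [Countable I] (T θ C : ℝ) (hT : 0 < T)
    (hθ : θ ∈ Set.Ioo (0 : ℝ) 1) (hC : 0 < C)
    (a b : I → ℝ) (hab : ∀ i, 0 ≤ a i ∧ a i < b i ∧ b i ≤ T)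
    (hdisj : Pairwise (Function.onFun Disjoint fun i => Set.Ioo (a i) (b i)))
    (g : ℝ → ℝ) (hg0 : ∀ t ∈ Set.Ioo (0 : ℝ) T, 0 ≤ g t)
    (hgint : MeasureTheory.IntegrableOn g (Set.Ioo 0 T))
    (hbound : ∀ i, ∀ t ∈ Set.Ioo (a i) (b i), C * (b i - t) ^ (-θ) ≤ 1 + g t) :
    ∑' i, ENNReal.ofReal ((b i - a i) ^ (1 - θ)) ≤
      ENNReal.ofReal (((1 - θ) / C) * (T + ∫ t in Set.Ioo (0 : ℝ) T, g t)) := by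
  obtain ⟨hθ0, hθ1⟩ := hθ
  have h1θ : 0 < 1 - θ := by linarith
  set k : ℝ := (1 - θ) / C with hk
  have hkpos : 0 < k := div_pos h1θ hC
  set F : ℝ → ℝ≥0∞ := fun t => ENNReal.ofReal (1 + g t) with hF
  -- step 1 : per-interval bound
  have step1 : ∀ i, ENNReal.ofReal ((b i - a i) ^ (1 - θ)) ≤
      ENNReal.ofReal k * ∫⁻ t in Set.Ioo (a i) (b i), F t := by
    intro i
    obtain ⟨ha0, habi, hbT⟩ := hab i
    -- the exact integral
    have hInt : ∫ t in (a i)..(b i), C * (b i - t) ^ (-θ) =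
        C * ((b i - a i) ^ (1 - θ) / (1 - θ)) := by
      rw [intervalIntegral.integral_const_mul]
      have := intervalIntegral.integral_comp_sub_left (fun x => x ^ (-θ)) (b i)
        (a := a i) (b := b i)
      rw [this, sub_self]
      rw [integral_rpow (Or.inl (by linarith))]
      rw [Real.zero_rpow (by linarith)]
      ring_nf
    have hii : IntervalIntegrable (fun t => C * (b i - t) ^ (-θ)) volume (a i) (b i) := by
      apply IntervalIntegrable.const_mul
      have h0 : IntervalIntegrable (fun x : ℝ => x ^ (-θ)) volume (b i - b i) (b i - a i) :=
        intervalIntegral.intervalIntegrable_rpow' (by linarith)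
      simpa using (h0.comp_sub_left (b i)).symm
    -- express via lintegral
    have hset : ∫ t in (a i)..(b i), C * (b i - t) ^ (-θ) =
        ∫ t in Set.Ioo (a i) (b i), C * (b i - t) ^ (-θ) := by
      rw [intervalIntegral.integral_of_le habi.le, MeasureTheory.integral_Ioc_eq_integral_Ioo]
    have hnonneg : 0 ≤ᵐ[volume.restrict (Set.Ioo (a i) (b i))]
        fun t => C * (b i - t) ^ (-θ) := by
      filter_upwards [ae_restrict_mem measurableSet_Ioo] with t ht
      exact mul_nonneg hC.le (Real.rpow_nonneg (by linarith [ht.2]) _)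
    have hIntOn : IntegrableOn (fun t => C * (b i - t) ^ (-θ)) (Set.Ioo (a i) (b i)) := by
      have := hii.1
      rw [intervalIntegrable_iff_integrableOn_Ioo_of_le habi.le] at hii
      exact hii
    have hofReal : ENNReal.ofReal (∫ t in Set.Ioo (a i) (b i), C * (b i - t) ^ (-θ)) =
        ∫⁻ t in Set.Ioo (a i) (b i), ENNReal.ofReal (C * (b i - t) ^ (-θ)) :=
      MeasureTheory.ofReal_integral_eq_lintegral_ofReal hIntOn hnonneg
    have hmono : ∫⁻ t in Set.Ioo (a i) (b i), ENNReal.ofReal (C * (b i - t) ^ (-θ)) ≤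
        ∫⁻ t in Set.Ioo (a i) (b i), F t := by
      apply lintegral_mono_ae
      filter_upwards [ae_restrict_mem measurableSet_Ioo] with t ht
      exact ENNReal.ofReal_le_ofReal (hbound i t ht)
    calc ENNReal.ofReal ((b i - a i) ^ (1 - θ))
        = ENNReal.ofReal (k * ∫ t in Set.Ioo (a i) (b i), C * (b i - t) ^ (-θ)) := by
          rw [← hset, hInt]
          congr 1
          rw [hk]
          field_simp
      _ = ENNReal.ofReal k * ENNReal.ofReal
            (∫ t in Set.Ioo (a i) (b i), C * (b i - t) ^ (-θ)) :=
          ENNReal.ofReal_mul hkpos.le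
      _ ≤ ENNReal.ofReal k * ∫⁻ t in Set.Ioo (a i) (b i), F t := by
          rw [hofReal]; exact le_rfl.trans (mul_le_mul_right hmono _)
  -- step 2: sum the lintegrals
  have hsub : ∀ i, Set.Ioo (a i) (b i) ⊆ Set.Ioo (0 : ℝ) T := by
    intro i t ht
    obtain ⟨ha0, habi, hbT⟩ := hab i
    exact ⟨lt_of_le_of_lt ha0 ht.1, lt_of_lt_of_le ht.2 hbT⟩
  have step2 : ∑' i, ∫⁻ t in Set.Ioo (a i) (b i), F t ≤ ∫⁻ t in Set.Ioo (0 : ℝ) T, F t := by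
    rw [← MeasureTheory.lintegral_iUnion (fun i => measurableSet_Ioo) hdisj]
    exact lintegral_mono_set (Set.iUnion_subset hsub)
  -- step 3: evaluate the big lintegral
  have step3 : ∫⁻ t in Set.Ioo (0 : ℝ) T, F t =
      ENNReal.ofReal (T + ∫ t in Set.Ioo (0 : ℝ) T, g t) := by
    have hInt1 : IntegrableOn (fun t => 1 + g t) (Set.Ioo (0 : ℝ) T) :=
      (integrableOn_const measure_Ioo_lt_top.ne).add hgint
    rw [← MeasureTheory.ofReal_integral_eq_lintegral_ofReal hInt1 ?_]
    · congr 1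
      rw [MeasureTheory.integral_add (integrableOn_const (C := (1 : ℝ)) measure_Ioo_lt_top.ne) hgint]
      simp [Real.volume_Ioo, hT.le]
    · filter_upwards [ae_restrict_mem measurableSet_Ioo] with t ht
      simp only [Pi.zero_apply]
      linarith [hg0 t ht]
  calc ∑' i, ENNReal.ofReal ((b i - a i) ^ (1 - θ))
      ≤ ∑' i, ENNReal.ofReal k * ∫⁻ t in Set.Ioo (a i) (b i), F t := ENNReal.tsum_le_tsum step1
    _ = ENNReal.ofReal k * ∑' i, ∫⁻ t in Set.Ioo (a i) (b i), F t := (ENNReal.tsum_mul_left)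
    _ ≤ ENNReal.ofReal k * ∫⁻ t in Set.Ioo (0 : ℝ) T, F t := mul_le_mul_right step2 _
    _ = ENNReal.ofReal (k * (T + ∫ t in Set.Ioo (0 : ℝ) T, g t)) := by
        rw [step3, ← ENNReal.ofReal_mul hkpos.le]
end

section
/- Let T > 0 and d ∈ (0,1). Let (αᵢ, βᵢ), i ∈ ℕ, be pairwise disjoint open subintervals of (0,T) with 0 ≤ αᵢ < βᵢ ≤ T, and set S = [0,T] \ ⋃ᵢ (αᵢ, βᵢ). Assume that S has one-dimensional Lebesgue measure zero and that ∑ᵢ (βᵢ − αᵢ)^d < ∞. Then the d-dimensional Hausdorff measure of S is zero. -/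
open Set MeasureTheory Filter ENNReal Topology

namespace HMZAux

/-- The "gap" piece of `[0,T]` determined by a choice `f` of side (left/right) for each of the
first `n` intervals: points `x` with `b j ≤ x` when `f j = true` and `x ≤ a j` otherwise. -/
def piece (T : ℝ) (a b : ℕ → ℝ) (n : ℕ) (f : Fin n → Bool) : Set ℝ :=
  Set.Icc ((Finset.univ.filter fun j : Fin n => f j = true).fold max 0 fun j : Fin n => b (j : ℕ))
          ((Finset.univ.filter fun j : Fin n => f j = false).fold min T fun j : Fin n => a (j : ℕ))

lemma mem_piece {T : ℝ} {a b : ℕ → ℝ} {n : ℕ} {f : Fin n → Bool} {x : ℝ} :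
    x ∈ piece T a b n f ↔ (0 ≤ x ∧ x ≤ T) ∧
      ∀ j : Fin n, (f j = true → b j ≤ x) ∧ (f j = false → x ≤ a j) := by
  simp only [piece, Set.mem_Icc, Finset.fold_max_le, Finset.le_fold_min, Finset.mem_filter,
    Finset.mem_univ, true_and]
  constructor
  · rintro ⟨⟨h0, hb⟩, hT, ha⟩
    exact ⟨⟨h0, hT⟩, fun j => ⟨fun h => hb j h, fun h => ha j h⟩⟩
  · rintro ⟨⟨h0, hT⟩, h⟩
    exact ⟨⟨h0, fun j hj => (h j).1 hj⟩, hT, fun j hj => (h j).2 hj⟩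

lemma piece_disjoint {T : ℝ} {a b : ℕ → ℝ} {n : ℕ} (hlt : ∀ i, a i < b i)
    {f g : Fin n → Bool} (hfg : f ≠ g) :
    Disjoint (piece T a b n f) (piece T a b n g) := by
  rw [Set.disjoint_left]
  intro x hxf hxg
  obtain ⟨j, hj⟩ := Function.ne_iff.1 hfg
  have hf := (mem_piece.1 hxf).2 j
  have hg := (mem_piece.1 hxg).2 j
  have hj' := hlt (j : ℕ)
  cases hfj : f j with
  | true =>
    cases hgj : g j with
    | true => exact hj (hfj.trans hgj.symm)
    | false =>
      have h1 := hf.1 hfj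
      have h2 := hg.2 hgj
      linarith
  | false =>
    cases hgj : g j with
    | false => exact hj (hfj.trans hgj.symm)
    | true =>
      have h1 := hf.2 hfj
      have h2 := hg.1 hgj
      linarith

lemma Ioo_subset_piece {T : ℝ} {a b : ℕ → ℝ}
    (hab : ∀ i, 0 ≤ a i ∧ a i < b i ∧ b i ≤ T)
    (hdisj : Pairwise (Function.onFun Disjoint fun i => Set.Ioo (a i) (b i)))
    {n : ℕ} {f : Fin n → Bool} {k : ℕ} (hk : n ≤ k)
    (hne : (piece T a b n f ∩ Set.Ioo (a k) (b k)).Nonempty) :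
    Set.Ioo (a k) (b k) ⊆ piece T a b n f := by
  obtain ⟨x, hxP, hxI⟩ := hne
  intro y hy
  rw [mem_piece] at hxP ⊢
  obtain ⟨-, hx⟩ := hxP
  have hjk : ∀ j : Fin n, (j : ℕ) ≠ k := fun j => Nat.ne_of_lt (lt_of_lt_of_le j.2 hk)
  refine ⟨⟨le_trans (hab k).1 hy.1.le, le_trans hy.2.le (hab k).2.2⟩, fun j => ⟨?_, ?_⟩⟩
  · intro hfj
    have hbj : b (j : ℕ) ≤ x := (hx j).1 hfj
    have hjlt := (hab (j : ℕ)).2.1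
    by_contra hyb
    push_neg at hyb
    have hya : y ≤ a (j : ℕ) := by
      by_contra hya
      push_neg at hya
      exact (Set.disjoint_left.1 (hdisj (hjk j)) ⟨hya, hyb⟩) hy
    have hz : (a (j : ℕ) + b (j : ℕ)) / 2 ∈ Set.Ioo (a (j : ℕ)) (b (j : ℕ)) :=
      ⟨by linarith, by linarith⟩
    have hzk : (a (j : ℕ) + b (j : ℕ)) / 2 ∈ Set.Ioo (a k) (b k) :=
      ⟨by have := hy.1; linarith, by have := hxI.2; linarith⟩
    exact (Set.disjoint_left.1 (hdisj (hjk j)) hz) hzk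
  · intro hfj
    have haj : x ≤ a (j : ℕ) := (hx j).2 hfj
    have hjlt := (hab (j : ℕ)).2.1
    by_contra hya
    push_neg at hya
    have hyb : b (j : ℕ) ≤ y := by
      by_contra hyb
      push_neg at hyb
      exact (Set.disjoint_left.1 (hdisj (hjk j)) ⟨hya, hyb⟩) hy
    have hz : (a (j : ℕ) + b (j : ℕ)) / 2 ∈ Set.Ioo (a (j : ℕ)) (b (j : ℕ)) :=
      ⟨by linarith, by linarith⟩
    have hzk : (a (j : ℕ) + b (j : ℕ)) / 2 ∈ Set.Ioo (a k) (b k) :=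
      ⟨by have := hxI.1; linarith, by have := hy.2; linarith⟩
    exact (Set.disjoint_left.1 (hdisj (hjk j)) hz) hzk

lemma exists_piece {T : ℝ} {a b : ℕ → ℝ} (n : ℕ) {x : ℝ} (hx0 : 0 ≤ x) (hxT : x ≤ T)
    (hxI : ∀ i, x ∉ Set.Ioo (a i) (b i)) :
    ∃ f : Fin n → Bool, x ∈ piece T a b n f := by
  refine ⟨fun j => decide (b (j : ℕ) ≤ x), ?_⟩
  rw [mem_piece]
  refine ⟨⟨hx0, hxT⟩, fun j => ⟨fun h => of_decide_eq_true h, fun h => ?_⟩⟩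
  have hxb : ¬ b (j : ℕ) ≤ x := of_decide_eq_false h
  by_contra hax
  exact hxI j ⟨lt_of_not_ge hax, lt_of_not_ge hxb⟩

lemma rpow_sum_le {ι : Type*} (s : Finset ι) (g : ι → ℝ≥0∞) {p : ℝ} (hp : 0 < p) (hp1 : p ≤ 1) :
    (∑ i ∈ s, g i) ^ p ≤ ∑ i ∈ s, g i ^ p := by
  classical
  induction s using Finset.induction_on with
  | empty => simp [ENNReal.zero_rpow_of_pos hp]
  | insert _ _ hx ih =>
    rw [Finset.sum_insert hx, Finset.sum_insert hx]
    exact le_trans (ENNReal.rpow_add_le_add_rpow _ _ hp.le hp1) (add_le_add_right ih _)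

lemma rpow_tsum_le (g : ℕ → ℝ≥0∞) {p : ℝ} (hp : 0 < p) (hp1 : p ≤ 1) :
    (∑' i, g i) ^ p ≤ ∑' i, g i ^ p := by
  rw [← ENNReal.le_rpow_inv_iff hp, ENNReal.tsum_eq_iSup_sum]
  refine iSup_le fun s => ?_
  rw [ENNReal.le_rpow_inv_iff hp]
  exact le_trans (rpow_sum_le s g hp hp1) (ENNReal.sum_le_tsum s)

end HMZAux

open HMZAux

/-- Covering argument (Step 3 of Theorem 4.3): if `S = [0,T] \ ⋃ᵢ (aᵢ, bᵢ)` with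
pairwise disjoint open subintervals of `(0,T)`, `S` has Lebesgue measure zero, and
`∑ᵢ (bᵢ - aᵢ)^d < ∞` for some `d ∈ (0,1)`, then the `d`-dimensional Hausdorff measure
of `S` is zero. -/
theorem hausdorff_measure_zero_of_summable_pow (T d : ℝ) (hT : 0 < T)
    (hd : d ∈ Set.Ioo (0 : ℝ) 1)
    (a b : ℕ → ℝ) (hab : ∀ i, 0 ≤ a i ∧ a i < b i ∧ b i ≤ T)
    (hdisj : Pairwise (Function.onFun Disjoint fun i => Set.Ioo (a i) (b i)))
    (S : Set ℝ) (hS : S = Set.Icc 0 T \ ⋃ i, Set.Ioo (a i) (b i))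
    (hnull : MeasureTheory.volume S = 0)
    (hsum : Summable fun i => (b i - a i) ^ d) :
    MeasureTheory.Measure.hausdorffMeasure d S = 0 := by
  classical
  obtain ⟨hd0, hd1⟩ := hd
  have hnn : ∀ i, 0 ≤ (b i - a i) ^ d := fun i =>
    Real.rpow_nonneg (sub_nonneg.2 (hab i).2.1.le) d
  set c : ℕ → ℝ≥0∞ := fun n => ENNReal.ofReal (∑' i, (b (i + n) - a (i + n)) ^ d) with hc
  have htails : ∀ n, Summable fun i => (b (i + n) - a (i + n)) ^ d := fun n =>
    (summable_nat_add_iff n).2 hsum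
  have htailnn : ∀ n, 0 ≤ ∑' i, (b (i + n) - a (i + n)) ^ d := fun n =>
    tsum_nonneg fun i => hnn _
  have hreal_tend : Tendsto (fun n => ∑' i, (b (i + n) - a (i + n)) ^ d) atTop (𝓝 0) :=
    tendsto_sum_nat_add fun i => (b i - a i) ^ d
  set r : ℕ → ℝ≥0∞ := fun n => c n ^ d⁻¹ with hr
  have hrtend : Tendsto r atTop (𝓝 0) := by
    have hre : r = fun n => ENNReal.ofReal ((∑' i, (b (i + n) - a (i + n)) ^ d) ^ d⁻¹) := by
      funext n
      rw [hr, hc]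
      exact ENNReal.ofReal_rpow_of_nonneg (htailnn n) (by positivity)
    rw [hre]
    have h2 : Tendsto (fun n => (∑' i, (b (i + n) - a (i + n)) ^ d) ^ d⁻¹) atTop (𝓝 0) := by
      have h4 := (Real.continuousAt_rpow_const 0 d⁻¹ (Or.inr (by positivity))).tendsto
      have h5 := h4.comp hreal_tend
      simpa [Function.comp_def, Real.zero_rpow (inv_ne_zero hd0.ne')] using h5
    simpa using ENNReal.tendsto_ofReal h2
  set t : ∀ n : ℕ, (Fin n → Bool) → Set ℝ := fun n f => piece T a b n f with ht
  -- the per-piece diameter estimate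
  have hdiam_pow : ∀ n (f : Fin n → Bool),
      EMetric.diam (t n f) ^ d ≤ ∑' i, (if Set.Ioo (a (i + n)) (b (i + n)) ⊆ t n f
        then ENNReal.ofReal ((b (i + n) - a (i + n)) ^ d) else 0) := by
    intro n f
    have hdiamvol : EMetric.diam (t n f) = volume (t n f) := by
      show Metric.ediam (Set.Icc _ _) = volume (Set.Icc _ _)
      rw [Real.ediam_Icc, Real.volume_Icc]
    have hPsub : t n f ⊆ (t n f ∩ S) ∪ ⋃ i, (t n f ∩ Set.Ioo (a (i + n)) (b (i + n))) := by
      intro x hx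
      by_cases hxS : x ∈ S
      · exact Or.inl ⟨hx, hxS⟩
      · have hmem := mem_piece.1 hx
        have hxIcc : x ∈ Set.Icc (0 : ℝ) T := Set.mem_Icc.2 ⟨hmem.1.1, hmem.1.2⟩
        have hxU : x ∈ ⋃ i, Set.Ioo (a i) (b i) := by
          by_contra hni
          exact hxS (hS ▸ ⟨hxIcc, hni⟩)
        obtain ⟨i, hi⟩ := Set.mem_iUnion.1 hxU
        have hin : n ≤ i := by
          by_contra hlt
          push_neg at hlt
          have hji := hmem.2 ⟨i, hlt⟩
          cases hfi : f ⟨i, hlt⟩ with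
          | true => exact absurd (hji.1 hfi) (not_le.2 hi.2)
          | false => exact absurd (hji.2 hfi) (not_le.2 hi.1)
        refine Or.inr (Set.mem_iUnion.2 ⟨i - n, ?_⟩)
        have hi' : i - n + n = i := Nat.sub_add_cancel hin
        rw [hi']
        exact ⟨hx, hi⟩
    have hterm : ∀ i, volume (t n f ∩ Set.Ioo (a (i + n)) (b (i + n))) ≤
        (if Set.Ioo (a (i + n)) (b (i + n)) ⊆ t n f
          then ENNReal.ofReal (b (i + n) - a (i + n)) else 0) := by
      intro i
      by_cases hne : (t n f ∩ Set.Ioo (a (i + n)) (b (i + n))).Nonempty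
      · have hsub := Ioo_subset_piece hab hdisj (Nat.le_add_left n i) hne
        rw [if_pos hsub]
        calc volume (t n f ∩ Set.Ioo (a (i + n)) (b (i + n)))
            ≤ volume (Set.Ioo (a (i + n)) (b (i + n))) := measure_mono Set.inter_subset_right
          _ = ENNReal.ofReal (b (i + n) - a (i + n)) := Real.volume_Ioo
      · rw [Set.not_nonempty_iff_eq_empty.1 hne]
        simp
    have hvol : volume (t n f) ≤
        ∑' i, (if Set.Ioo (a (i + n)) (b (i + n)) ⊆ t n f
          then ENNReal.ofReal (b (i + n) - a (i + n)) else 0) := by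
      calc volume (t n f)
          ≤ volume ((t n f ∩ S) ∪ ⋃ i, (t n f ∩ Set.Ioo (a (i + n)) (b (i + n)))) :=
            measure_mono hPsub
        _ ≤ volume (t n f ∩ S) + volume (⋃ i, (t n f ∩ Set.Ioo (a (i + n)) (b (i + n)))) :=
            measure_union_le _ _
        _ ≤ 0 + ∑' i, volume (t n f ∩ Set.Ioo (a (i + n)) (b (i + n))) := by
            refine add_le_add ?_ (measure_iUnion_le _)
            exact le_trans (measure_mono Set.inter_subset_right) hnull.le
        _ = ∑' i, volume (t n f ∩ Set.Ioo (a (i + n)) (b (i + n))) := zero_add _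
        _ ≤ _ := ENNReal.tsum_le_tsum hterm
    calc EMetric.diam (t n f) ^ d = volume (t n f) ^ d := by rw [hdiamvol]
      _ ≤ (∑' i, (if Set.Ioo (a (i + n)) (b (i + n)) ⊆ t n f
            then ENNReal.ofReal (b (i + n) - a (i + n)) else 0)) ^ d :=
          ENNReal.rpow_le_rpow hvol hd0.le
      _ ≤ ∑' i, (if Set.Ioo (a (i + n)) (b (i + n)) ⊆ t n f
            then ENNReal.ofReal (b (i + n) - a (i + n)) else 0) ^ d :=
          rpow_tsum_le _ hd0 hd1.le
      _ = ∑' i, (if Set.Ioo (a (i + n)) (b (i + n)) ⊆ t n f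
            then ENNReal.ofReal ((b (i + n) - a (i + n)) ^ d) else 0) := by
          refine tsum_congr fun i => ?_
          split
          · exact ENNReal.ofReal_rpow_of_nonneg (sub_nonneg.2 (hab _).2.1.le) hd0.le
          · exact ENNReal.zero_rpow_of_pos hd0
  -- summing over pieces
  have hsum_le : ∀ n, (∑ f : Fin n → Bool, EMetric.diam (t n f) ^ d) ≤ c n := by
    intro n
    have hstep : ∀ i : ℕ, (∑ f : Fin n → Bool, (if Set.Ioo (a (i + n)) (b (i + n)) ⊆ t n f
        then ENNReal.ofReal ((b (i + n) - a (i + n)) ^ d) else 0)) ≤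
        ENNReal.ofReal ((b (i + n) - a (i + n)) ^ d) := by
      intro i
      by_cases hex : ∃ f : Fin n → Bool, Set.Ioo (a (i + n)) (b (i + n)) ⊆ t n f
      · obtain ⟨f₀, hf₀⟩ := hex
        have huniq : ∀ g : Fin n → Bool, g ≠ f₀ →
            ¬ Set.Ioo (a (i + n)) (b (i + n)) ⊆ t n g := by
          intro g hg hgsub
          obtain ⟨z, hz⟩ := Set.nonempty_Ioo.2 (hab (i + n)).2.1
          exact Set.disjoint_left.1 (piece_disjoint (fun j => (hab j).2.1) hg)
            (hgsub hz) (hf₀ hz)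
        rw [Finset.sum_eq_single f₀ (fun g _ hg => if_neg (huniq g hg))
          (fun h => absurd (Finset.mem_univ f₀) h)]
        rw [if_pos hf₀]
      · push_neg at hex
        rw [Finset.sum_eq_zero fun g _ => if_neg fun h => (hex g) h]
        exact zero_le
    calc (∑ f : Fin n → Bool, EMetric.diam (t n f) ^ d)
        ≤ ∑ f : Fin n → Bool, ∑' i, (if Set.Ioo (a (i + n)) (b (i + n)) ⊆ t n f
            then ENNReal.ofReal ((b (i + n) - a (i + n)) ^ d) else 0) :=
          Finset.sum_le_sum fun f _ => hdiam_pow n f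
      _ = ∑' i, ∑ f : Fin n → Bool, (if Set.Ioo (a (i + n)) (b (i + n)) ⊆ t n f
            then ENNReal.ofReal ((b (i + n) - a (i + n)) ^ d) else 0) :=
          (Summable.tsum_finsetSum fun _ _ => ENNReal.summable).symm
      _ ≤ ∑' i, ENNReal.ofReal ((b (i + n) - a (i + n)) ^ d) := ENNReal.tsum_le_tsum hstep
      _ = c n := (ENNReal.ofReal_tsum_of_nonneg (fun i => hnn _) (htails n)).symm
  have hdiam_le_r : ∀ n (f : Fin n → Bool), EMetric.diam (t n f) ≤ r n := by
    intro n f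
    have h1 : EMetric.diam (t n f) ^ d ≤ c n :=
      le_trans (Finset.single_le_sum (f := fun g : Fin n → Bool => EMetric.diam (t n g) ^ d)
        (fun g _ => zero_le) (Finset.mem_univ f)) (hsum_le n)
    exact (ENNReal.le_rpow_inv_iff hd0).2 h1
  have hcov : ∀ n : ℕ, S ⊆ ⋃ f : Fin n → Bool, t n f := by
    intro n x hx
    rw [hS] at hx
    obtain ⟨hx1, hxI⟩ := hx
    obtain ⟨hx0, hxT⟩ := Set.mem_Icc.1 hx1
    obtain ⟨f, hf⟩ := exists_piece (T := T) (a := a) (b := b) n hx0 hxT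
      (fun i hi => hxI (Set.mem_iUnion.2 ⟨i, hi⟩))
    exact Set.mem_iUnion.2 ⟨f, hf⟩
  refine le_antisymm ?_ zero_le
  have hmain := MeasureTheory.Measure.hausdorffMeasure_le_liminf_sum d S r hrtend t
    (Filter.Eventually.of_forall fun n => hdiam_le_r n) (Filter.Eventually.of_forall hcov)
  refine le_trans hmain ?_
  have hlim : Filter.liminf (fun n => ∑ f : Fin n → Bool, EMetric.diam (t n f) ^ d) atTop ≤
      Filter.liminf c atTop :=
    Filter.liminf_le_liminf (Filter.Eventually.of_forall hsum_le)
  have hc0 : Filter.liminf c atTop = 0 := by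
    have : Tendsto c atTop (𝓝 0) := by
      simpa using ENNReal.tendsto_ofReal hreal_tend
    exact this.liminf_eq
  rw [hc0] at hlim
  exact hlim
end

section
/- Let T > 0, θ ∈ (0,1) and C > 0. Let (αᵢ, βᵢ), i ∈ ℕ, be pairwise disjoint open subintervals of (0,T) with 0 ≤ αᵢ < βᵢ ≤ T, and set S = [0,T] \ ⋃ᵢ (αᵢ, βᵢ). Let g : ℝ → ℝ be nonnegative and integrable on (0,T). Assume that S has one-dimensional Lebesgue measure zero and that for every i and every t ∈ (αᵢ, βᵢ) one has C·(βᵢ − t)^{−θ} ≤ 1 + g(t). Then the (1−θ)-dimensional Hausdorff measure of S is zero. -/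
open Set MeasureTheory Filter ENNReal

lemma aux_tsum_rpow {f : ℕ → ℝ≥0∞} {p : ℝ} (hp : 0 < p) (hp1 : p ≤ 1) :
    (∑' i, f i) ^ p ≤ ∑' i, f i ^ p := by
  have hfin : ∀ F : Finset ℕ, (∑ i ∈ F, f i) ^ p ≤ ∑ i ∈ F, f i ^ p := by
    intro F
    induction F using Finset.cons_induction with
    | empty => simp [ENNReal.zero_rpow_of_pos hp]
    | cons a F ha ih =>
      rw [Finset.sum_cons, Finset.sum_cons]
      exact (ENNReal.rpow_add_le_add_rpow _ _ hp.le hp1).trans (add_le_add le_rfl ih)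
  have h2 : (∑' i, f i) ≤ (∑' i, f i ^ p) ^ (1 / p) := by
    rw [ENNReal.tsum_eq_iSup_sum]
    refine iSup_le fun F => ?_
    have hF : (∑ i ∈ F, f i) = ((∑ i ∈ F, f i) ^ p) ^ (1 / p) := by
      rw [← ENNReal.rpow_mul, mul_one_div, div_self hp.ne', ENNReal.rpow_one]
    rw [hF]
    exact ENNReal.rpow_le_rpow ((hfin F).trans (ENNReal.sum_le_tsum F)) (by positivity)
  calc (∑' i, f i) ^ p ≤ ((∑' i, f i ^ p) ^ (1 / p)) ^ p := ENNReal.rpow_le_rpow h2 hp.le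
  _ = ∑' i, f i ^ p := by
      rw [← ENNReal.rpow_mul, one_div, inv_mul_cancel₀ hp.ne', ENNReal.rpow_one]

lemma aux_tail_tsum (f : ℕ → ℝ≥0∞) (N : ℕ) :
    (∑' i, if N ≤ i then f i else 0) = ∑' k, f (k + N) := by
  have h1 : (fun i => if N ≤ i then f i else 0) = Set.indicator {i : ℕ | N ≤ i} f := by
    funext i; simp [Set.indicator_apply, Set.mem_setOf_eq]
  rw [h1, ← tsum_subtype]
  exact (Equiv.tsum_eq ((⟨fun k => ⟨k + N, Nat.le_add_left N k⟩, fun i => i - N,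
    fun k => by simp, fun i => Subtype.ext (Nat.sub_add_cancel i.2)⟩ :
      ℕ ≃ ↑{i : ℕ | N ≤ i})) (fun i => f ↑i)).symm

/-- Abstract form of Theorem 4.3: if `S = [0,T] \ ⋃ᵢ (aᵢ, bᵢ)` has Lebesgue measure
zero, `g ≥ 0` is integrable on `(0,T)`, and on each interval `(aᵢ, bᵢ)` the rate bound
`C (bᵢ - t)^(-θ) ≤ 1 + g t` holds with `θ ∈ (0,1)`, then the `(1-θ)`-dimensional
Hausdorff measure of `S` is zero. -/
theorem hausdorff_measure_singular_set_zero (T θ C : ℝ) (hT : 0 < T)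
    (hθ : θ ∈ Set.Ioo (0 : ℝ) 1) (hC : 0 < C)
    (a b : ℕ → ℝ) (hab : ∀ i, 0 ≤ a i ∧ a i < b i ∧ b i ≤ T)
    (hdisj : Pairwise (Function.onFun Disjoint fun i => Set.Ioo (a i) (b i)))
    (S : Set ℝ) (hS : S = Set.Icc 0 T \ ⋃ i, Set.Ioo (a i) (b i))
    (hnull : MeasureTheory.volume S = 0)
    (g : ℝ → ℝ) (hg0 : ∀ t ∈ Set.Ioo (0 : ℝ) T, 0 ≤ g t)
    (hgint : MeasureTheory.IntegrableOn g (Set.Ioo 0 T))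
    (hbound : ∀ i, ∀ t ∈ Set.Ioo (a i) (b i), C * (b i - t) ^ (-θ) ≤ 1 + g t) :
    MeasureTheory.Measure.hausdorffMeasure (1 - θ) S = 0 := by
  classical
  obtain ⟨hθ0, hθ1⟩ := hθ
  have hs0 : 0 < 1 - θ := by linarith
  have hs1 : 1 - θ ≤ 1 := by linarith
  set I : ℕ → Set ℝ := fun i => Set.Ioo (a i) (b i) with hI
  have hIsub : ∀ i, I i ⊆ Set.Ioo 0 T := fun i u hu =>
    ⟨lt_of_le_of_lt (hab i).1 hu.1, lt_of_lt_of_le hu.2 (hab i).2.2⟩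
  -- endpoints of intervals never lie in an open interval
  have hep : ∀ i j, a j ∉ I i ∧ b j ∉ I i := by
    intro i j
    rcases eq_or_ne j i with rfl | hij
    · exact ⟨fun h => lt_irrefl _ h.1, fun h => lt_irrefl _ h.2⟩
    · have hdis : Disjoint (I j) (I i) := hdisj hij
      constructor
      · rintro ⟨h1, h2⟩
        have hj := (hab j).2.1
        have hmin : a j < min (b i) (b j) := lt_min h2 hj
        have h3 := min_le_left (b i) (b j)
        have h4 := min_le_right (b i) (b j)
        have hm1 : (a j + min (b i) (b j)) / 2 ∈ I j :=
          ⟨by linarith, by linarith⟩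
        have hm2 : (a j + min (b i) (b j)) / 2 ∈ I i :=
          ⟨by linarith, by linarith⟩
        exact Set.disjoint_left.mp hdis hm1 hm2
      · rintro ⟨h1, h2⟩
        have hj := (hab j).2.1
        have hmax : max (a i) (a j) < b j := max_lt h1 hj
        have h3 := le_max_left (a i) (a j)
        have h4 := le_max_right (a i) (a j)
        have hm1 : (max (a i) (a j) + b j) / 2 ∈ I j :=
          ⟨by linarith, by linarith⟩
        have hm2 : (max (a i) (a j) + b j) / 2 ∈ I i :=
          ⟨by linarith, by linarith⟩
        exact Set.disjoint_left.mp hdis hm1 hm2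
  -- the finite sets of endpoints
  set P : ℕ → Finset ℝ := fun N =>
    insert 0 (insert T (((Finset.range N).image a) ∪ ((Finset.range N).image b))) with hP
  have hPmem : ∀ N z, z ∈ P N ↔
      z = 0 ∨ z = T ∨ (∃ j < N, a j = z) ∨ (∃ j < N, b j = z) := by
    intro N z
    simp [hP, Finset.mem_insert, Finset.mem_union, Finset.mem_image, Finset.mem_range]
  have hPIcc : ∀ N, ∀ z ∈ P N, 0 ≤ z ∧ z ≤ T := by
    intro N z hz
    rcases (hPmem N z).1 hz with rfl | rfl | ⟨j, _, rfl⟩ | ⟨j, _, rfl⟩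
    · exact ⟨le_rfl, hT.le⟩
    · exact ⟨hT.le, le_rfl⟩
    · exact ⟨(hab j).1, le_trans (hab j).2.1.le (hab j).2.2⟩
    · exact ⟨le_trans (hab j).1 (hab j).2.1.le, (hab j).2.2⟩
  have hPnot : ∀ N, ∀ z ∈ P N, ∀ i, z ∉ I i := by
    intro N z hz i
    rcases (hPmem N z).1 hz with rfl | rfl | ⟨j, _, rfl⟩ | ⟨j, _, rfl⟩
    · rintro ⟨h1, -⟩; exact absurd h1 (not_lt.2 (hab i).1)
    · rintro ⟨-, h2⟩; exact absurd h2 (not_lt.2 (hab i).2.2)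
    · exact (hep i j).1
    · exact (hep i j).2
  -- "good" pairs: gaps of the N-th approximation
  set good : ℕ → ℝ → ℝ → Prop := fun N p q =>
    p ≤ q ∧ (∀ z ∈ P N, z ∉ Set.Ioo p q) ∧ ∀ j < N, ∀ u ∈ Set.Ioo p q, u ∉ I j
    with hgood
  -- the covering families
  set Q : ℕ → Finset (ℝ × ℝ) := fun N => P N ×ˢ P N with hQ
  set t : (N : ℕ) → ↥(Q N) → Set ℝ := fun N pq =>
    if good N pq.1.1 pq.1.2 then Set.Icc pq.1.1 pq.1.2 else (∅ : Set ℝ) with ht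
  -- measure of the intervals
  set σ : ℕ → ℝ≥0∞ := fun i => volume (I i) with hσdef
  set ρ : ℕ → ℝ≥0∞ := fun i => σ i ^ (1 - θ) with hρdef
  have hσ : ∀ i, σ i = ENNReal.ofReal (b i - a i) := fun i => Real.volume_Ioo
  have hσsum : ∑' i, σ i ≠ ∞ := by
    have h1 : ∑' i, σ i = volume (⋃ i, I i) :=
      (measure_iUnion hdisj fun i => measurableSet_Ioo).symm
    have h2 : volume (⋃ i, I i) ≤ volume (Set.Ioo 0 T) :=
      measure_mono (Set.iUnion_subset hIsub)
    rw [h1]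
    exact ne_top_of_le_ne_top measure_Ioo_lt_top.ne h2
  -- integrability and the ℓ^{1-θ} bound
  have hgi : IntegrableOn (fun u => 1 + g u) (Set.Ioo 0 T) := by
    refine Integrable.add ?_ hgint
    exact integrableOn_const measure_Ioo_lt_top.ne
  have hFsummable : Summable (fun i => ∫ u in I i, (1 + g u)) :=
    ⟨_, hasSum_integral_iUnion (fun i => measurableSet_Ioo) hdisj
      (hgi.mono_set (Set.iUnion_subset hIsub))⟩
  have hkey : ∀ i, C * (b i - a i) ^ (1 - θ) ≤ ∫ u in I i, (1 + g u) := by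
    intro i
    obtain ⟨h0, hlt, hT'⟩ := hab i
    have hd : 0 < b i - a i := sub_pos.2 hlt
    have hconst : ∀ u ∈ I i, C * (b i - a i) ^ (-θ) ≤ 1 + g u := by
      intro u hu
      refine le_trans ?_ (hbound i u hu)
      have h5 : (b i - a i) ^ (-θ) ≤ (b i - u) ^ (-θ) := by
        refine Real.rpow_le_rpow_of_nonpos ?_ ?_ (by linarith)
        · linarith [hu.2]
        · linarith [hu.1]
      exact mul_le_mul_of_nonneg_left h5 hC.le
    have h6 := setIntegral_ge_of_const_le_real (μ := volume) measurableSet_Ioo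
      measure_Ioo_lt_top.ne hconst (hgi.mono_set (hIsub i))
    have h7 : volume.real (Set.Ioo (a i) (b i)) = b i - a i := by
      rw [Measure.real, Real.volume_Ioo, ENNReal.toReal_ofReal hd.le]
    rw [h7] at h6
    have h8 : C * (b i - a i) ^ (1 - θ) = C * (b i - a i) ^ (-θ) * (b i - a i) := by
      rw [mul_assoc]
      congr 1
      rw [show (1 : ℝ) - θ = -θ + 1 by ring, Real.rpow_add hd, Real.rpow_one]
    rw [h8]
    exact h6
  have hρsummR : Summable (fun i => (b i - a i) ^ (1 - θ)) := by
    have h1 : Summable (fun i => C * (b i - a i) ^ (1 - θ)) := by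
      refine Summable.of_nonneg_of_le (fun i => ?_) hkey hFsummable
      exact mul_nonneg hC.le (Real.rpow_nonneg (by linarith [(hab i).2.1]) _)
    have h2 := h1.mul_left C⁻¹
    have h3 : (fun i => C⁻¹ * (C * (b i - a i) ^ (1 - θ)))
        = fun i => (b i - a i) ^ (1 - θ) := by
      funext i; rw [← mul_assoc, inv_mul_cancel₀ hC.ne', one_mul]
    rwa [h3] at h2
  have hρsum : ∑' i, ρ i ≠ ∞ := by
    have h1 : ∀ i, ρ i = ENNReal.ofReal ((b i - a i) ^ (1 - θ)) := by
      intro i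
      rw [hρdef]
      simp only
      rw [hσ i, ← ENNReal.ofReal_rpow_of_nonneg (by linarith [(hab i).2.1]) hs0.le]
    have h2 : ∑' i, ρ i = ENNReal.ofReal (∑' i, (b i - a i) ^ (1 - θ)) := by
      rw [ENNReal.ofReal_tsum_of_nonneg
        (fun i => Real.rpow_nonneg (by linarith [(hab i).2.1]) _) hρsummR]
      exact tsum_congr h1
    rw [h2]
    exact ENNReal.ofReal_ne_top
  -- tails
  set rr : ℕ → ℝ≥0∞ := fun N => ∑' k, σ (k + N) with hrr
  set ρt : ℕ → ℝ≥0∞ := fun N => ∑' k, ρ (k + N) with hρt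
  have hrr0 : Tendsto rr atTop (nhds 0) := ENNReal.tendsto_sum_nat_add σ hσsum
  have hρt0 : Tendsto ρt atTop (nhds 0) := ENNReal.tendsto_sum_nat_add ρ hρsum
  -- volume of a gap is controlled by the tail intervals it contains
  have hcover_vol : ∀ N p q, p ∈ P N → q ∈ P N → good N p q →
      ENNReal.ofReal (q - p) ≤ ∑' i, (if N ≤ i ∧ I i ⊆ Set.Ioo p q then σ i else 0) := by
    intro N p q hp hq hg
    rcases eq_or_lt_of_le hg.1 with rfl | hpq
    · simp
    have hsub : Set.Ioo p q ⊆ S ∪ ⋃ i, ⋃ (_ : N ≤ i ∧ I i ⊆ Set.Ioo p q), I i := by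
      intro u hu
      by_cases hmem : ∃ i, u ∈ I i
      · obtain ⟨i, hi⟩ := hmem
        have hiN : N ≤ i := by
          by_contra h
          exact hg.2.2 i (not_le.1 h) u hu hi
        have hps : p ≤ a i := by
          by_contra h
          exact hPnot N p hp i ⟨not_le.1 h, lt_trans hu.1 hi.2⟩
        have hqs : b i ≤ q := by
          by_contra h
          exact hPnot N q hq i ⟨lt_trans hi.1 hu.2, not_le.1 h⟩
        exact Or.inr (Set.mem_iUnion.2 ⟨i, Set.mem_iUnion.2
          ⟨⟨hiN, Set.Ioo_subset_Ioo hps hqs⟩, hi⟩⟩)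
      · refine Or.inl ?_
        rw [hS]
        refine ⟨⟨le_trans (hPIcc N p hp).1 hu.1.le, le_trans hu.2.le (hPIcc N q hq).2⟩, ?_⟩
        exact fun hUm => hmem (Set.mem_iUnion.1 hUm)
    calc ENNReal.ofReal (q - p) = volume (Set.Ioo p q) := (Real.volume_Ioo).symm
      _ ≤ volume (S ∪ ⋃ i, ⋃ (_ : N ≤ i ∧ I i ⊆ Set.Ioo p q), I i) := measure_mono hsub
      _ ≤ volume S + volume (⋃ i, ⋃ (_ : N ≤ i ∧ I i ⊆ Set.Ioo p q), I i) :=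
          measure_union_le _ _
      _ ≤ 0 + ∑' i, volume (⋃ (_ : N ≤ i ∧ I i ⊆ Set.Ioo p q), I i) := by
          rw [hnull]
          exact add_le_add le_rfl (measure_iUnion_le _)
      _ ≤ ∑' i, (if N ≤ i ∧ I i ⊆ Set.Ioo p q then σ i else 0) := by
          rw [zero_add]
          refine ENNReal.tsum_le_tsum fun i => ?_
          by_cases hc : N ≤ i ∧ I i ⊆ Set.Ioo p q
          · rw [if_pos hc]
            exact le_of_eq (by rw [Set.iUnion_eq_if, if_pos hc])
          · rw [if_neg hc]
            exact le_of_eq (by rw [Set.iUnion_eq_if, if_neg hc, measure_empty])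
  -- diameters of the covering sets are controlled by the tail length
  have hdiam : ∀ N (pq : ↥(Q N)), EMetric.diam (t N pq) ≤ rr N := by
    intro N pq
    obtain ⟨⟨p, q⟩, hpq⟩ := pq
    have hpq' : (p, q) ∈ P N ×ˢ P N := by simpa [hQ] using hpq
    have hp : p ∈ P N := (Finset.mem_product.1 hpq').1
    have hq : q ∈ P N := (Finset.mem_product.1 hpq').2
    simp only [ht]
    by_cases hg : good N p q
    · rw [if_pos hg, EMetric.diam, Real.ediam_Icc]
      refine le_trans (hcover_vol N p q hp hq hg) ?_
      simp only [hrr]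
      rw [← aux_tail_tsum σ N]
      refine ENNReal.tsum_le_tsum fun i => ?_
      by_cases hc : N ≤ i ∧ I i ⊆ Set.Ioo p q
      · rw [if_pos hc, if_pos hc.1]
      · rw [if_neg hc]
        exact zero_le
    · rw [if_neg hg, EMetric.diam, Metric.ediam_empty]
      exact zero_le
  -- the covering property
  have hcov : ∀ N, S ⊆ ⋃ pq : ↥(Q N), t N pq := by
    intro N x hxS
    have hxIcc : x ∈ Set.Icc 0 T := by rw [hS] at hxS; exact hxS.1
    have hxU : x ∉ ⋃ i, Set.Ioo (a i) (b i) := by rw [hS] at hxS; exact hxS.2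
    by_cases hx : x ∈ P N
    · have hmem : ((x, x) : ℝ × ℝ) ∈ Q N := by
        simp only [hQ]; exact Finset.mem_product.2 ⟨hx, hx⟩
      have hgd : good N x x := by
        refine ⟨le_rfl, fun z _ hz => ?_, fun j _ u hu _ => ?_⟩
        · simp at hz
        · simp at hu
      refine Set.mem_iUnion.2 ⟨⟨(x, x), hmem⟩, ?_⟩
      simp only [ht]
      rw [if_pos hgd]
      exact ⟨le_rfl, le_rfl⟩
    · have h0P : (0 : ℝ) ∈ P N := (hPmem N 0).2 (Or.inl rfl)
      have hTP : (T : ℝ) ∈ P N := (hPmem N T).2 (Or.inr (Or.inl rfl))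
      have hx0 : 0 < x := by
        rcases hxIcc.1.eq_or_lt with h | h
        · exact absurd (h ▸ h0P) hx
        · exact h
      have hxT : x < T := by
        rcases hxIcc.2.eq_or_lt with h | h
        · exact absurd (h.symm ▸ hTP) hx
        · exact h
      set Pl := (P N).filter (fun z => z < x) with hPl
      set Pr := (P N).filter (fun z => x < z) with hPr
      have hPlne : Pl.Nonempty := ⟨0, Finset.mem_filter.2 ⟨h0P, hx0⟩⟩
      have hPrne : Pr.Nonempty := ⟨T, Finset.mem_filter.2 ⟨hTP, hxT⟩⟩
      set p := Pl.max' hPlne with hp_def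
      set q := Pr.min' hPrne with hq_def
      have hpmem := Finset.mem_filter.1 (Pl.max'_mem hPlne)
      have hqmem := Finset.mem_filter.1 (Pr.min'_mem hPrne)
      have hpx : p < x := hpmem.2
      have hxq : x < q := hqmem.2
      have hgd : good N p q := by
        refine ⟨(lt_trans hpx hxq).le, fun z hzP hz => ?_, fun j hj u hu huI => ?_⟩
        · rcases lt_trichotomy z x with h | h | h
          · exact absurd hz.1 (not_lt.2 (Finset.le_max' Pl z (Finset.mem_filter.2 ⟨hzP, h⟩)))
          · exact hx (h ▸ hzP)
          · exact absurd hz.2 (not_lt.2 (Finset.min'_le Pr z (Finset.mem_filter.2 ⟨hzP, h⟩)))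
        · have haP : a j ∈ P N := (hPmem N (a j)).2 (Or.inr (Or.inr (Or.inl ⟨j, hj, rfl⟩)))
          have hbP : b j ∈ P N := (hPmem N (b j)).2 (Or.inr (Or.inr (Or.inr ⟨j, hj, rfl⟩)))
          have hxnot : x ∉ I j := fun h => hxU (Set.mem_iUnion.2 ⟨j, h⟩)
          rcases lt_trichotomy u x with h | h | h
          · refine hxnot ⟨lt_trans huI.1 h, ?_⟩
            by_contra hbx
            push_neg at hbx
            have hbne : b j ≠ x := fun he => hx (he ▸ hbP)
            have hble : b j ≤ p :=
              Finset.le_max' Pl (b j) (Finset.mem_filter.2 ⟨hbP, lt_of_le_of_ne hbx hbne⟩)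
            have hpb : p < b j := lt_trans hu.1 huI.2
            linarith
          · exact hxnot (h ▸ huI)
          · refine hxnot ⟨?_, lt_trans h huI.2⟩
            by_contra hax
            push_neg at hax
            have hane : x ≠ a j := fun he => hx (he.symm ▸ haP)
            have hage : q ≤ a j :=
              Finset.min'_le Pr (a j) (Finset.mem_filter.2 ⟨haP, lt_of_le_of_ne hax hane⟩)
            have haq : a j < q := lt_trans huI.1 hu.2
            linarith
      have hmem : ((p, q) : ℝ × ℝ) ∈ Q N := by
        simp only [hQ]; exact Finset.mem_product.2 ⟨hpmem.1, hqmem.1⟩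
      refine Set.mem_iUnion.2 ⟨⟨(p, q), hmem⟩, ?_⟩
      simp only [ht]
      rw [if_pos hgd]
      exact ⟨hpx.le, hxq.le⟩
  -- two good gaps containing a common interval coincide
  have huniq : ∀ N (p q p' q' : ℝ) i, p ∈ P N → q ∈ P N → p' ∈ P N → q' ∈ P N →
      good N p q → good N p' q' → I i ⊆ Set.Ioo p q → I i ⊆ Set.Ioo p' q' →
      p = p' ∧ q = q' := by
    intro N p q p' q' i hp hq hp' hq' hg hg' h1 h2
    have hu : (a i + b i) / 2 ∈ I i := by
      constructor
      · linarith [(hab i).2.1]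
      · linarith [(hab i).2.1]
    have hu1 := h1 hu
    have hu2 := h2 hu
    constructor
    · rcases lt_trichotomy p p' with h | h | h
      · exact ((hg.2.1 p' hp') ⟨h, lt_trans hu2.1 hu1.2⟩).elim
      · exact h
      · exact ((hg'.2.1 p hp) ⟨h, lt_trans hu1.1 hu2.2⟩).elim
    · rcases lt_trichotomy q q' with h | h | h
      · exact ((hg'.2.1 q hq) ⟨lt_trans hu2.1 hu1.2, h⟩).elim
      · exact h
      · exact ((hg.2.1 q' hq') ⟨lt_trans hu1.1 hu2.2, h⟩).elim
  -- the crucial bound on the sums of diameters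
  have hsum_le : ∀ N, (∑' pq : ↥(Q N), EMetric.diam (t N pq) ^ (1 - θ)) ≤ ρt N := by
    intro N
    set w : ↥(Q N) → ℕ → ℝ≥0∞ := fun pq i =>
      if N ≤ i ∧ good N pq.1.1 pq.1.2 ∧ I i ⊆ Set.Ioo pq.1.1 pq.1.2 then ρ i else 0 with hw
    have hstep1 : ∀ pq : ↥(Q N), EMetric.diam (t N pq) ^ (1 - θ) ≤ ∑' i, w pq i := by
      rintro ⟨⟨p, q⟩, hpq⟩
      have hpq' : (p, q) ∈ P N ×ˢ P N := by simpa [hQ] using hpq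
      have hp : p ∈ P N := (Finset.mem_product.1 hpq').1
      have hq : q ∈ P N := (Finset.mem_product.1 hpq').2
      by_cases hg : good N p q
      · have hteq : t N ⟨(p, q), hpq⟩ = Set.Icc p q := by
          simp only [ht]; rw [if_pos hg]
        rw [hteq, EMetric.diam, Real.ediam_Icc]
        calc (ENNReal.ofReal (q - p)) ^ (1 - θ)
            ≤ (∑' i, (if N ≤ i ∧ I i ⊆ Set.Ioo p q then σ i else 0)) ^ (1 - θ) :=
              ENNReal.rpow_le_rpow (hcover_vol N p q hp hq hg) hs0.le
          _ ≤ ∑' i, (if N ≤ i ∧ I i ⊆ Set.Ioo p q then σ i else 0) ^ (1 - θ) :=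
              aux_tsum_rpow hs0 hs1
          _ = ∑' i, w ⟨(p, q), hpq⟩ i := by
              refine tsum_congr fun i => ?_
              by_cases hc : N ≤ i ∧ I i ⊆ Set.Ioo p q
              · rw [if_pos hc]
                simp only [hw]
                rw [if_pos ⟨hc.1, hg, hc.2⟩]
              · rw [if_neg hc, ENNReal.zero_rpow_of_pos hs0]
                simp only [hw]
                rw [if_neg (fun hcc => hc ⟨hcc.1, hcc.2.2⟩)]
      · have hteq : t N ⟨(p, q), hpq⟩ = ∅ := by
          simp only [ht]; rw [if_neg hg]
        rw [hteq, EMetric.diam, Metric.ediam_empty, ENNReal.zero_rpow_of_pos hs0]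
        exact zero_le
    have hstep3 : ∀ i, (∑' pq : ↥(Q N), w pq i) ≤ (if N ≤ i then ρ i else 0) := by
      intro i
      rw [tsum_fintype]
      by_cases hex : ∃ pq₀ : ↥(Q N),
          N ≤ i ∧ good N pq₀.1.1 pq₀.1.2 ∧ I i ⊆ Set.Ioo pq₀.1.1 pq₀.1.2
      · obtain ⟨pq₀, hc₀⟩ := hex
        have heq : (∑ pq : ↥(Q N), w pq i) = w pq₀ i := by
          refine Finset.sum_eq_single pq₀ (fun pq _ hne => ?_)
            (fun h => absurd (Finset.mem_univ _) h)
          simp only [hw]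
          refine if_neg fun hc => hne ?_
          have hm1 : (pq : ℝ × ℝ).1 ∈ P N ∧ (pq : ℝ × ℝ).2 ∈ P N := by
            exact Finset.mem_product.1 pq.2
          have hm2 : (pq₀ : ℝ × ℝ).1 ∈ P N ∧ (pq₀ : ℝ × ℝ).2 ∈ P N := by
            exact Finset.mem_product.1 pq₀.2
          obtain ⟨hpp, hqq⟩ := huniq N pq.1.1 pq.1.2 pq₀.1.1 pq₀.1.2 i
            hm1.1 hm1.2 hm2.1 hm2.2
            hc.2.1 hc₀.2.1 hc.2.2 hc₀.2.2
          exact Subtype.ext (Prod.ext hpp hqq)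
        rw [heq]
        simp only [hw]
        rw [if_pos hc₀, if_pos hc₀.1]
      · have hz : ∀ pq : ↥(Q N), w pq i = 0 := by
          intro pq
          simp only [hw]
          exact if_neg (fun hc => hex ⟨pq, hc⟩)
        rw [Finset.sum_eq_zero fun pq _ => hz pq]
        exact zero_le
    calc (∑' pq : ↥(Q N), EMetric.diam (t N pq) ^ (1 - θ))
        ≤ ∑' pq : ↥(Q N), ∑' i, w pq i := ENNReal.tsum_le_tsum hstep1
      _ = ∑' i, ∑' pq : ↥(Q N), w pq i := ENNReal.tsum_comm
      _ ≤ ∑' i, (if N ≤ i then ρ i else 0) := ENNReal.tsum_le_tsum hstep3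
      _ = ρt N := by simp only [hρt]; rw [aux_tail_tsum ρ N]
  -- conclusion
  refine le_antisymm ?_ (zero_le)
  have hmain := MeasureTheory.Measure.hausdorffMeasure_le_liminf_tsum (1 - θ) S rr hrr0 t
    (Eventually.of_forall hdiam) (Eventually.of_forall hcov)
  refine le_trans hmain (le_trans (liminf_le_liminf (Eventually.of_forall hsum_le)) ?_)
  rw [hρt0.liminf_eq]
end
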